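/- Let T = ∫⊕_X R(x) dμ(x) be a decomposable operator from V_J to V_{J'}. Then the closure of T(V_J) is the MI space whose range function J'' satisfies J''(x) = closure of R(x)(J(x)) for a.e. x ∈ X, and the kernel of T is the MI space whose range function K satisfies K(x) = ker R(x) for a.e. x ∈ X. -/

import Mathlib

open MeasureTheory
open scoped ENNReal NNReal

noncomputable section

/-- The multiplication-invariant subspace `V_J ⊆ L²(X;H)` determined by a range
function `J`. -/
def VJ {X : Type*} [MeasurableSpace X] (μ : Measure X)
    {H : Type*} [NormedAddCommGroup H] [InnerProductSpace ℂ H]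
    (J : X → Submodule ℂ H) : Submodule ℂ (Lp H 2 μ) where
  carrier := {φ | ∀ᵐ x ∂μ, φ x ∈ J x}
  add_mem' := by
    intro a b ha hb
    simp only [Set.mem_setOf_eq] at ha hb ⊢
    filter_upwards [Lp.coeFn_add a b, ha, hb] with x h1 h2 h3
    rw [h1]
    exact (J x).add_mem h2 h3
  zero_mem' := by
    filter_upwards [Lp.coeFn_zero H 2 μ] with x h1
    rw [h1]
    exact (J x).zero_mem
  smul_mem' := by
    intro c f hf
    show ∀ᵐ x ∂μ, (c • f : Lp H 2 μ) x ∈ J x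
    filter_upwards [Lp.coeFn_smul c f, hf] with x h1 h2
    rw [h1]
    exact (J x).smul_mem c h2

-- auxiliary lemmas (to be inserted above the theorem)

lemma mem_VJ_iff {X : Type*} [MeasurableSpace X] {μ : Measure X}
    {H : Type*} [NormedAddCommGroup H] [InnerProductSpace ℂ H]
    {J : X → Submodule ℂ H} {φ : Lp H 2 μ} :
    φ ∈ VJ μ J ↔ ∀ᵐ x ∂μ, φ x ∈ J x := Iff.rfl

lemma isClosed_VJ {X : Type*} [MeasurableSpace X] (μ : Measure X)
    {H : Type*} [NormedAddCommGroup H] [InnerProductSpace ℂ H]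
    (K : X → Submodule ℂ H) (hK : ∀ x, IsClosed (K x : Set H)) :
    IsClosed ((VJ μ K : Set (Lp H 2 μ))) := by
  apply IsSeqClosed.isClosed
  intro f p hf hfp
  have h1 : TendstoInMeasure μ (fun n => (f n : X → H)) Filter.atTop (p : X → H) :=
    tendstoInMeasure_of_tendsto_Lp hfp
  obtain ⟨ns, -, hns⟩ := h1.exists_seq_tendsto_ae
  have h2 : ∀ᵐ x ∂μ, ∀ n, f (ns n) x ∈ K x := by
    rw [MeasureTheory.ae_all_iff]
    exact fun n => hf (ns n)
  show ∀ᵐ x ∂μ, p x ∈ K x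
  filter_upwards [hns, h2] with x hx1 hx2
  exact (hK x).mem_of_tendsto hx1 (Filter.Eventually.of_forall hx2)

lemma stronglyMeasurable_proj {X : Type*} [MeasurableSpace X]
    {H : Type*} [NormedAddCommGroup H] [InnerProductSpace ℂ H]
    [SecondCountableTopology H]
    (J : X → Submodule ℂ H) [∀ x, CompleteSpace ↥(J x)]
    (hJm : ∀ u v : H, Measurable fun x => (inner ℂ ((Submodule.orthogonalProjectionOnto (J x) u : H)) v : ℂ))
    (u : H) :
    StronglyMeasurable (fun x => (Submodule.orthogonalProjectionOnto (J x) u : H)) := by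
  set g : X → H := fun x => (Submodule.orthogonalProjectionOnto (J x) u : H) with hg
  have hgg : Measurable fun x => (inner ℂ (g x) (g x) : ℂ) := by
    have heq : ∀ x, (inner ℂ (g x) (g x) : ℂ) = inner ℂ (g x) u := by
      intro x
      have h0 : (inner ℂ (g x) (u - g x) : ℂ) = 0 :=
        (Submodule.mem_orthogonal (J x) (u - g x)).1
          (Submodule.sub_starProjection_mem_orthogonal u) (g x)
          (by exact (Submodule.orthogonalProjectionOnto (J x) u).2)
      calc (inner ℂ (g x) (g x) : ℂ)
          = inner ℂ (g x) (g x) + inner ℂ (g x) (u - g x) := by rw [h0, add_zero]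
        _ = inner ℂ (g x) (g x + (u - g x)) := by rw [inner_add_right]
        _ = inner ℂ (g x) u := by rw [add_sub_cancel]
    simpa only [heq] using hJm u u
  have key : ∀ v : H, Measurable fun x => ‖g x - v‖ ^ 2 := by
    intro v
    have h1 : Measurable fun x => (inner ℂ (g x) v : ℂ) := hJm u v
    have h2 : Measurable fun x => (inner ℂ v (g x) : ℂ) := by
      have : ∀ x, (inner ℂ v (g x) : ℂ) = starRingEnd ℂ (inner ℂ (g x) v : ℂ) := fun x =>
        (inner_conj_symm _ _).symm
      simpa only [this, Function.comp_def] using (RCLike.continuous_conj.measurable.comp h1)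
    have hm : Measurable fun x =>
        RCLike.re ((inner ℂ (g x) (g x) : ℂ) - inner ℂ (g x) v - inner ℂ v (g x) + inner ℂ v v) :=
      RCLike.measurable_re.comp (((hgg.sub h1).sub h2).add measurable_const)
    have heq : ∀ x, ‖g x - v‖ ^ 2 =
        RCLike.re ((inner ℂ (g x) (g x) : ℂ) - inner ℂ (g x) v - inner ℂ v (g x) + inner ℂ v v) := by
      intro x
      rw [← inner_sub_sub_self, inner_self_eq_norm_sq]
    simpa only [heq] using hm
  letI : MeasurableSpace H := borel H
  haveI : BorelSpace H := ⟨rfl⟩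
  suffices hmg : Measurable g by exact hmg.stronglyMeasurable
  obtain ⟨D, hDc, hDd⟩ := TopologicalSpace.exists_countable_dense H
  apply measurable_generateFrom
  intro U hU
  replace hU : IsOpen U := hU
  have hset : g ⁻¹' U = ⋃ d ∈ D, ⋃ q : ℚ, ⋃ _ : 0 < q ∧ Metric.ball d (q : ℝ) ⊆ U,
      {x | ‖g x - d‖ ^ 2 < (q : ℝ) ^ 2} := by
    ext x
    simp only [Set.mem_preimage, Set.mem_iUnion, Set.mem_setOf_eq]
    constructor
    · intro hx
      obtain ⟨ε, hε, hball⟩ := Metric.isOpen_iff.1 hU (g x) hx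
      obtain ⟨q, hq0, hqε⟩ := exists_rat_btwn (half_pos hε)
      have hq0' : (0 : ℝ) < q := hq0
      obtain ⟨d, hdD, hdist⟩ := hDd.exists_dist_lt (g x) hq0'
      refine ⟨d, hdD, q, ⟨by exact_mod_cast hq0', fun y hy => hball ?_⟩, ?_⟩
      · have ht : dist y (g x) ≤ dist y d + dist d (g x) := dist_triangle _ _ _
        have h1 : dist y d < (q : ℝ) := hy
        have h2 : dist d (g x) < (q : ℝ) := by rwa [dist_comm]
        exact Metric.mem_ball.2 (by linarith [hqε])
      · have : ‖g x - d‖ < (q : ℝ) := by rwa [← dist_eq_norm]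
        exact pow_lt_pow_left₀ this (norm_nonneg _) (by norm_num)
    · rintro ⟨d, _, q, ⟨hq0, hsub⟩, hx⟩
      have hq0' : (0 : ℝ) ≤ q := le_of_lt (by exact_mod_cast hq0)
      have : ‖g x - d‖ < (q : ℝ) := lt_of_pow_lt_pow_left₀ 2 hq0' hx
      exact hsub (Metric.mem_ball.2 (by rwa [dist_eq_norm]))
  rw [hset]
  exact MeasurableSet.biUnion hDc fun d _ => MeasurableSet.iUnion fun q =>
    MeasurableSet.iUnion fun _ => measurableSet_lt (key d) measurable_const

lemma exists_testfun {X : Type*} [MeasurableSpace X] (μ : Measure X)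
    {H : Type*} [NormedAddCommGroup H] [InnerProductSpace ℂ H]
    [SecondCountableTopology H]
    (J : X → Submodule ℂ H) [∀ x, CompleteSpace ↥(J x)]
    (hJm : ∀ u v : H, Measurable fun x => (inner ℂ ((Submodule.orthogonalProjectionOnto (J x) u : H)) v : ℂ))
    (u : H) {s : Set X} (hs : MeasurableSet s) (hμs : μ s < ∞) :
    ∃ φ : ↥(VJ μ J), ((φ : Lp H 2 μ) : X → H)
      =ᵐ[μ] s.indicator (fun x => (Submodule.orthogonalProjectionOnto (J x) u : H)) := by
  set g : X → H := fun x => (Submodule.orthogonalProjectionOnto (J x) u : H) with hgdef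
  have hsm : StronglyMeasurable g := stronglyMeasurable_proj J hJm u
  have hmeas : AEStronglyMeasurable (s.indicator g) μ :=
    (hsm.indicator hs).aestronglyMeasurable
  have hbound : ∀ᵐ x ∂μ, ‖s.indicator g x‖ ≤ ‖s.indicator (fun _ => ‖u‖) x‖ := by
    refine Filter.Eventually.of_forall fun x => ?_
    by_cases hx : x ∈ s
    · rw [Set.indicator_of_mem hx, Set.indicator_of_mem hx]
      have h1 : ‖g x‖ = ‖Submodule.orthogonalProjectionOnto (J x) u‖ := rfl
      have h2 : ‖Submodule.orthogonalProjectionOnto (J x) u‖ ≤ ‖Submodule.orthogonalProjectionOnto (J x)‖ * ‖u‖ :=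
        (Submodule.orthogonalProjectionOnto (J x)).le_opNorm u
      have h3 : ‖Submodule.orthogonalProjectionOnto (J x)‖ * ‖u‖ ≤ 1 * ‖u‖ :=
        mul_le_mul_of_nonneg_right (Submodule.orthogonalProjectionOnto_norm_le (J x)) (norm_nonneg u)
      rw [h1, Real.norm_of_nonneg (norm_nonneg u)]
      linarith
    · rw [Set.indicator_of_notMem hx, Set.indicator_of_notMem hx]
      simp
  have hmem2 : MemLp (s.indicator g) 2 μ :=
    MemLp.of_le (memLp_indicator_const 2 hs ‖u‖ (Or.inr hμs.ne)) hmeas hbound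
  refine ⟨⟨hmem2.toLp _, ?_⟩, ?_⟩
  · show ∀ᵐ x ∂μ, (hmem2.toLp _) x ∈ J x
    filter_upwards [hmem2.coeFn_toLp] with x hx
    rw [hx]
    by_cases hxs : x ∈ s
    · rw [Set.indicator_of_mem hxs]
      exact (Submodule.orthogonalProjectionOnto (J x) u).2
    · rw [Set.indicator_of_notMem hxs]
      exact (J x).zero_mem
  · exact hmem2.coeFn_toLp

/-- for a decomposable operator `T = ∫⊕ R(x) dμ(x) : V_J → V_{J'}`, the
closure of the range of `T` is the MI space with range function `x ↦ closure (R(x)(J(x)))`,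
and the kernel of `T` is the MI space with range function `x ↦ ker R(x)`. -/
theorem decomposable_range_and_kernel
    {X : Type*} [MeasurableSpace X] (μ : Measure X) [SigmaFinite μ]
    [TopologicalSpace.SeparableSpace (Lp ℂ 2 μ)]
    {H H' : Type*} [NormedAddCommGroup H] [InnerProductSpace ℂ H] [CompleteSpace H]
    [SecondCountableTopology H]
    [NormedAddCommGroup H'] [InnerProductSpace ℂ H'] [CompleteSpace H']
    [SecondCountableTopology H']
    (J : X → Submodule ℂ H) (J' : X → Submodule ℂ H')
    [∀ x, CompleteSpace ↥(J x)] [∀ x, CompleteSpace ↥(J' x)]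
    (hJm : ∀ u v : H, Measurable fun x => (inner ℂ ((Submodule.orthogonalProjectionOnto (J x) u : H)) v : ℂ))
    (hJ'm : ∀ u v : H', Measurable fun x => (inner ℂ ((Submodule.orthogonalProjectionOnto (J' x) u : H')) v : ℂ))
    (R : (x : X) → (↥(J x) →L[ℂ] ↥(J' x)))
    (hRm : ∀ (u : H) (v : H'),
      Measurable fun x => (inner ℂ ((R x (Submodule.orthogonalProjectionOnto (J x) u) : H')) v : ℂ))
    (hRb : ∃ C, ∀ᵐ x ∂μ, ‖R x‖ ≤ C)
    (T : ↥(VJ μ J) →L[ℂ] ↥(VJ μ J'))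
    (hT : ∀ φ : ↥(VJ μ J), ∀ᵐ x ∂μ, ∀ hx : (φ : Lp H 2 μ) x ∈ J x,
      ((T φ : Lp H' 2 μ) x) = (R x ⟨(φ : Lp H 2 μ) x, hx⟩ : H'))
    :
    ((VJ μ (fun x => (Submodule.map (J' x).subtype (LinearMap.range (R x : ↥(J x) →ₗ[ℂ] ↥(J' x)))).topologicalClosure)
        : Set (Lp H' 2 μ)) =
      closure (Set.range (fun φ : ↥(VJ μ J) => (T φ : Lp H' 2 μ)))) ∧
    (∀ φ : ↥(VJ μ J), (T φ = 0 ↔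
      (φ : Lp H 2 μ) ∈ VJ μ (fun x => Submodule.map (J x).subtype (LinearMap.ker (R x : ↥(J x) →ₗ[ℂ] ↥(J' x)))))) := by
  classical
  set J'' : X → Submodule ℂ H' :=
    fun x => (Submodule.map (J' x).subtype (LinearMap.range (R x : ↥(J x) →ₗ[ℂ] ↥(J' x)))).topologicalClosure with hJ''
  set Rg : Set (Lp H' 2 μ) := Set.range (fun φ : ↥(VJ μ J) => (T φ : Lp H' 2 μ)) with hRg
  -- part 2: kernel description
  have part2 : ∀ φ : ↥(VJ μ J), (T φ = 0 ↔
      (φ : Lp H 2 μ) ∈ VJ μ (fun x => Submodule.map (J x).subtype (LinearMap.ker (R x : ↥(J x) →ₗ[ℂ] ↥(J' x))))) := by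
    intro φ
    constructor
    · intro h0
      have hcoe : ((T φ : Lp H' 2 μ)) = 0 := by rw [h0]; rfl
      have hz : ∀ᵐ x ∂μ, (T φ : Lp H' 2 μ) x = 0 := by
        rw [hcoe]; exact Lp.coeFn_zero H' 2 μ
      show ∀ᵐ x ∂μ, (φ : Lp H 2 μ) x ∈ Submodule.map (J x).subtype (LinearMap.ker (R x : ↥(J x) →ₗ[ℂ] ↥(J' x)))
      filter_upwards [hT φ, mem_VJ_iff.1 φ.2, hz] with x h1 h2 h3
      have h4 : (R x ⟨(φ : Lp H 2 μ) x, h2⟩ : H') = 0 := by rw [← h1 h2]; exact h3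
      refine Submodule.mem_map.2 ⟨⟨(φ : Lp H 2 μ) x, h2⟩, ?_, rfl⟩
      exact LinearMap.mem_ker.2 (by exact_mod_cast h4)
    · intro hmem
      have hz : ∀ᵐ x ∂μ, (T φ : Lp H' 2 μ) x = 0 := by
        have hmem' : ∀ᵐ x ∂μ, (φ : Lp H 2 μ) x ∈
            Submodule.map (J x).subtype (LinearMap.ker (R x : ↥(J x) →ₗ[ℂ] ↥(J' x))) := hmem
        filter_upwards [hT φ, mem_VJ_iff.1 φ.2, hmem'] with x h1 h2 h3
        obtain ⟨y, hy, hyx⟩ := Submodule.mem_map.1 h3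
        have : (⟨(φ : Lp H 2 μ) x, h2⟩ : J x) = y := Subtype.ext hyx.symm
        rw [h1 h2, this]
        have : R x y = 0 := LinearMap.mem_ker.1 hy
        rw [this]; rfl
      have : ((T φ : Lp H' 2 μ)) = 0 := by
        apply Lp.ext
        filter_upwards [hz, Lp.coeFn_zero H' 2 μ] with x h1 h2
        rw [h1, h2]
        rfl
      exact Subtype.ext this
  refine ⟨?_, part2⟩
  -- part 1: range description
  have hRgVJ : Rg ⊆ (VJ μ J'' : Set (Lp H' 2 μ)) := by
    rintro ψ ⟨φ, rfl⟩
    show ∀ᵐ x ∂μ, (T φ : Lp H' 2 μ) x ∈ J'' x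
    filter_upwards [hT φ, mem_VJ_iff.1 φ.2] with x h1 h2
    rw [h1 h2]
    exact Submodule.le_topologicalClosure _
      (Submodule.mem_map.2 ⟨R x ⟨(φ : Lp H 2 μ) x, h2⟩, ⟨⟨(φ : Lp H 2 μ) x, h2⟩, rfl⟩, rfl⟩)
  have hclosed : IsClosed (VJ μ J'' : Set (Lp H' 2 μ)) :=
    isClosed_VJ μ J'' (fun x => Submodule.isClosed_topologicalClosure _)
  have hsub : closure Rg ⊆ (VJ μ J'' : Set (Lp H' 2 μ)) := closure_minimal hRgVJ hclosed
  -- the hard direction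
  refine Set.Subset.antisymm ?_ hsub
  set S : ↥(VJ μ J) →ₗ[ℂ] Lp H' 2 μ :=
    (VJ μ J').subtype.comp (T : ↥(VJ μ J) →ₗ[ℂ] ↥(VJ μ J')) with hS
  set W0 : Submodule ℂ (Lp H' 2 μ) := LinearMap.range S with hW0def
  have hW0 : (W0 : Set (Lp H' 2 μ)) = Rg := by
    ext ψ
    simp only [hW0def, SetLike.mem_coe, LinearMap.mem_range, hRg, Set.mem_range]
    rfl
  set W : Submodule ℂ (Lp H' 2 μ) := W0.topologicalClosure with hWdef
  have hWset : (W : Set (Lp H' 2 μ)) = closure Rg := by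
    rw [hWdef, Submodule.topologicalClosure_coe, hW0]
  haveI : CompleteSpace ↥W := W0.isClosed_topologicalClosure.completeSpace_coe
  intro ψ hψ
  set ψ₀ : Lp H' 2 μ := ψ - ↑(Submodule.orthogonalProjectionOnto W ψ) with hψ₀def
  have hψ₀W : ψ₀ ∈ Wᗮ := Submodule.sub_starProjection_mem_orthogonal ψ
  have hprojmem : (↑(Submodule.orthogonalProjectionOnto W ψ) : Lp H' 2 μ) ∈ VJ μ J'' := by
    have : (↑(Submodule.orthogonalProjectionOnto W ψ) : Lp H' 2 μ) ∈ (W : Set (Lp H' 2 μ)) :=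
      (Submodule.orthogonalProjectionOnto W ψ).2
    rw [hWset] at this
    exact hsub this
  have hψVJ : ψ ∈ VJ μ J'' := hψ
  have hψ₀VJ : ∀ᵐ x ∂μ, ψ₀ x ∈ J'' x := by
    have : ψ₀ ∈ VJ μ J'' := Submodule.sub_mem _ hψVJ hprojmem
    filter_upwards [mem_VJ_iff.1 this] with x hx using hx
  have horth : ∀ φ : ↥(VJ μ J), (inner ℂ ((T φ : Lp H' 2 μ)) ψ₀ : ℂ) = 0 := by
    intro φ
    refine (Submodule.mem_orthogonal W ψ₀).1 hψ₀W _ ?_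
    exact W0.le_topologicalClosure (LinearMap.mem_range.2 ⟨φ, rfl⟩)
  -- key: for every u, the function x ↦ ⟪R x (P_{J x} u), ψ₀ x⟫ vanishes a.e.
  have hFu : ∀ u : H,
      (fun x => (inner ℂ ((R x (Submodule.orthogonalProjectionOnto (J x) u) : H')) (ψ₀ x) : ℂ)) =ᵐ[μ] 0 := by
    intro u
    set q : X → H' := fun x => (R x (Submodule.orthogonalProjectionOnto (J x) u) : H') with hq
    apply ae_eq_zero_of_forall_setIntegral_eq_of_sigmaFinite
    · intro s hs hμs
      obtain ⟨φ, hφ⟩ := exists_testfun μ J hJm u hs hμs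
      have hTφ : ∀ᵐ x ∂μ, (T φ : Lp H' 2 μ) x = s.indicator q x := by
        filter_upwards [hT φ, hφ] with x h1 h2
        by_cases hx : x ∈ s
        · rw [Set.indicator_of_mem hx] at h2 ⊢
          have hmem : (φ : Lp H 2 μ) x ∈ J x := h2 ▸ (Submodule.orthogonalProjectionOnto (J x) u).2
          rw [h1 hmem,
            show (⟨(φ : Lp H 2 μ) x, hmem⟩ : J x) = Submodule.orthogonalProjectionOnto (J x) u from
              Subtype.ext h2]
        · rw [Set.indicator_of_notMem hx] at h2 ⊢
          have hmem : (φ : Lp H 2 μ) x ∈ J x := h2 ▸ (J x).zero_mem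
          rw [h1 hmem, show (⟨(φ : Lp H 2 μ) x, hmem⟩ : J x) = 0 from Subtype.ext h2,
            map_zero]
          rfl
      have hInt : Integrable (fun x => (inner ℂ ((T φ : Lp H' 2 μ) x) (ψ₀ x) : ℂ)) μ :=
        L2.integrable_inner (𝕜 := ℂ) (T φ : Lp H' 2 μ) ψ₀
      refine (hInt.restrict (s := s)).congr ?_
      filter_upwards [ae_restrict_of_ae hTφ, ae_restrict_mem hs] with x h1 h2
      rw [h1, Set.indicator_of_mem h2]
    · intro s hs hμs
      obtain ⟨φ, hφ⟩ := exists_testfun μ J hJm u hs hμs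
      have hTφ : ∀ᵐ x ∂μ, (T φ : Lp H' 2 μ) x = s.indicator q x := by
        filter_upwards [hT φ, hφ] with x h1 h2
        by_cases hx : x ∈ s
        · rw [Set.indicator_of_mem hx] at h2 ⊢
          have hmem : (φ : Lp H 2 μ) x ∈ J x := h2 ▸ (Submodule.orthogonalProjectionOnto (J x) u).2
          rw [h1 hmem,
            show (⟨(φ : Lp H 2 μ) x, hmem⟩ : J x) = Submodule.orthogonalProjectionOnto (J x) u from
              Subtype.ext h2]
        · rw [Set.indicator_of_notMem hx] at h2 ⊢
          have hmem : (φ : Lp H 2 μ) x ∈ J x := h2 ▸ (J x).zero_mem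
          rw [h1 hmem, show (⟨(φ : Lp H 2 μ) x, hmem⟩ : J x) = 0 from Subtype.ext h2,
            map_zero]
          rfl
      calc ∫ x in s, (inner ℂ (q x) (ψ₀ x) : ℂ) ∂μ
          = ∫ x, s.indicator (fun x => (inner ℂ (q x) (ψ₀ x) : ℂ)) x ∂μ :=
            (integral_indicator hs).symm
        _ = ∫ x, (inner ℂ ((T φ : Lp H' 2 μ) x) (ψ₀ x) : ℂ) ∂μ := by
            refine integral_congr_ae ?_
            filter_upwards [hTφ] with x h1
            by_cases hx : x ∈ s
            · rw [Set.indicator_of_mem hx, h1, Set.indicator_of_mem hx]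
            · rw [Set.indicator_of_notMem hx, h1, Set.indicator_of_notMem hx,
                inner_zero_left]
        _ = (inner ℂ ((T φ : Lp H' 2 μ)) ψ₀ : ℂ) := (L2.inner_def _ _).symm
        _ = 0 := horth φ
  -- conclude ψ₀ = 0 a.e.
  obtain ⟨D, hDc, hDd⟩ := TopologicalSpace.exists_countable_dense H
  have hae : ∀ᵐ x ∂μ, ∀ d ∈ D,
      (inner ℂ ((R x (Submodule.orthogonalProjectionOnto (J x) d) : H')) (ψ₀ x) : ℂ) = 0 := by
    rw [MeasureTheory.ae_ball_iff hDc]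
    intro d _
    filter_upwards [hFu d] with x hx using hx
  have hψ₀0 : ψ₀ = 0 := by
    apply Lp.ext
    have : ∀ᵐ x ∂μ, ψ₀ x = 0 := by
      filter_upwards [hae, hψ₀VJ] with x hx1 hx2
      have hall : ∀ w : H,
          (inner ℂ ((R x (Submodule.orthogonalProjectionOnto (J x) w) : H')) (ψ₀ x) : ℂ) = 0 := by
        intro w
        have hcont : Continuous fun v : H =>
            (inner ℂ ((R x (Submodule.orthogonalProjectionOnto (J x) v) : H')) (ψ₀ x) : ℂ) :=
          Continuous.inner
            (((J' x).subtypeL.comp ((R x).comp (Submodule.orthogonalProjectionOnto (J x)))).continuous)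
            continuous_const
        obtain ⟨seq, hseqD, hseq⟩ := mem_closure_iff_seq_limit.1 (hDd w)
        have h0 : Filter.Tendsto
            (fun n => (inner ℂ ((R x (Submodule.orthogonalProjectionOnto (J x) (seq n)) : H')) (ψ₀ x) : ℂ))
            Filter.atTop
            (nhds (inner ℂ ((R x (Submodule.orthogonalProjectionOnto (J x) w) : H')) (ψ₀ x) : ℂ)) :=
          (hcont.tendsto w).comp hseq
        have h1 : (fun n =>
            (inner ℂ ((R x (Submodule.orthogonalProjectionOnto (J x) (seq n)) : H')) (ψ₀ x) : ℂ)) =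
            fun _ => (0 : ℂ) := funext fun n => hx1 (seq n) (hseqD n)
        rw [h1] at h0
        exact tendsto_nhds_unique h0 tendsto_const_nhds
      have hperp : ∀ v ∈ ((Submodule.map (J' x).subtype (LinearMap.range (R x : ↥(J x) →ₗ[ℂ] ↥(J' x))) : Submodule ℂ H') :
          Set H'), (inner ℂ v (ψ₀ x) : ℂ) = 0 := by
        rintro v ⟨w, ⟨a, rfl⟩, rfl⟩
        have := hall (a : H)
        rwa [Submodule.orthogonalProjectionOnto_mem_subspace_eq_self a] at this
      have hcl : closure ((Submodule.map (J' x).subtype (LinearMap.range (R x : ↥(J x) →ₗ[ℂ] ↥(J' x))) :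
          Submodule ℂ H') : Set H') ⊆ {v : H' | (inner ℂ v (ψ₀ x) : ℂ) = 0} :=
        closure_minimal hperp
          (isClosed_eq (Continuous.inner continuous_id continuous_const) continuous_const)
      have hmemcl : ψ₀ x ∈ closure ((Submodule.map (J' x).subtype (LinearMap.range (R x : ↥(J x) →ₗ[ℂ] ↥(J' x))) :
          Submodule ℂ H') : Set H') := by
        rw [← Submodule.topologicalClosure_coe]
        exact hx2
      have : (inner ℂ (ψ₀ x) (ψ₀ x) : ℂ) = 0 := hcl hmemcl
      exact inner_self_eq_zero.1 this
    filter_upwards [this, Lp.coeFn_zero H' 2 μ] with x h1 h2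
    rw [h1, h2]
    rfl
  have : ψ = ↑(Submodule.orthogonalProjectionOnto W ψ) := by
    have := sub_eq_zero.1 (hψ₀def ▸ hψ₀0)
    exact this
  rw [this, ← hWset]
  exact (Submodule.orthogonalProjectionOnto W ψ).2
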